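/- arXiv:1211.4624 — 2 statements merged into one kernel-verified Lean document; each statement's English description precedes it below -/
import Mathlib

section
/- Let $A = R[[t]]$ where $R$ is a complete discrete valuation ring of mixed characteristic $(0,p)$ with valuation $v$ normalized by $v(p) = 1$. Let $f \in A^\times$ be a unit which is not a $p$-th power in $A$, and suppose the special fiber of the normalization $B$ of $A$ in $\mathrm{Frac}(A)[y]/(y^p - f)$ is reduced. Then $\mu := \sup \{ v_0(f - h^p) : h \in A^\times \}$ satisfies $\mu < p/(p-1)$, where $v_0$ is the Gauss valuation on $A$ (the $\pi$-adic valuation of the ideal $\pi A$ extended to $A$). -/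
set_option synthInstance.maxHeartbeats 1000000
set_option maxHeartbeats 1000000
set_option maxRecDepth 10000

/-- The Gauss valuation `v₀` on `A = R[[t]]`, normalized so that `v₀ c = 1`:
`v₀ g = (min_i v(coeff i g)) / v(c)`, where `v` is the `ℕ∞`-valued additive valuation of
the discrete valuation ring `R`.  (Taking `c = p` gives the normalization `v(p) = 1`.) -/
noncomputable def gaussV0 (R : Type*) [CommRing R] [IsDomain R] [IsDiscreteValuationRing R]
    (c : R) (g : PowerSeries R) : ℚ :=
  (((⨅ i : ℕ, IsDiscreteValuationRing.addVal R (PowerSeries.coeff (R := R) i g)).toNat : ℚ)) /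
    ((IsDiscreteValuationRing.addVal R c).toNat : ℚ)

set_option linter.unusedSectionVars false

namespace Stmt8Aux

open PowerSeries

variable {R : Type*} [CommRing R] [IsDomain R] [IsDiscreteValuationRing R]

/-- Coefficientwise divisibility by a constant power series. -/
lemma C_dvd_iff (r : R) (g : PowerSeries R) :
    (PowerSeries.C (R := R) r) ∣ g ↔ ∀ i, r ∣ PowerSeries.coeff (R := R) i g := by
  constructor
  · rintro ⟨q, rfl⟩ i
    rw [PowerSeries.coeff_C_mul]
    exact Dvd.intro _ rfl
  · intro hyp
    refine ⟨PowerSeries.mk fun i => (hyp i).choose, ?_⟩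
    ext i
    rw [PowerSeries.coeff_C_mul, PowerSeries.coeff_mk]
    exact (hyp i).choose_spec

lemma addVal_coe_le_iff {π : R} (hπ : Irreducible π) (a : R) (n : ℕ) :
    (n : ℕ∞) ≤ IsDiscreteValuationRing.addVal R a ↔ π ^ n ∣ a := by
  rw [← hπ.addVal_pow, IsDiscreteValuationRing.addVal_le_iff_dvd]

lemma eq_zero_of_forall_pow_dvd {π : R} (hπ : Irreducible π) (a : R)
    (h : ∀ n : ℕ, π ^ n ∣ a) : a = 0 := by
  by_contra ha
  have hne : IsDiscreteValuationRing.addVal R a ≠ ⊤ :=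
    fun ht => ha (IsDiscreteValuationRing.addVal_eq_top_iff.mp ht)
  set m := (IsDiscreteValuationRing.addVal R a).toNat with hm
  have h1 : ((m + 1 : ℕ) : ℕ∞) ≤ IsDiscreteValuationRing.addVal R a :=
    (addVal_coe_le_iff hπ a (m + 1)).mpr (h (m + 1))
  rw [← ENat.coe_toNat hne, ← hm, Nat.cast_le] at h1
  omega

/-- The minimum of the `addVal` of coefficients. -/
noncomputable def V (g : PowerSeries R) : ℕ∞ :=
  ⨅ i : ℕ, IsDiscreteValuationRing.addVal R (PowerSeries.coeff (R := R) i g)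

lemma gaussV0_eq (c : R) (g : PowerSeries R) :
    gaussV0 R c g = (((V g).toNat : ℚ)) / ((IsDiscreteValuationRing.addVal R c).toNat : ℚ) := rfl

lemma coe_le_V_iff {π : R} (hπ : Irreducible π) (g : PowerSeries R) (n : ℕ) :
    (n : ℕ∞) ≤ V g ↔ (PowerSeries.C (R := R) π) ^ n ∣ g := by
  rw [V, le_iInf_iff, ← map_pow, C_dvd_iff]
  exact forall_congr' fun i => addVal_coe_le_iff hπ _ n

lemma V_ne_top {g : PowerSeries R} (hg : g ≠ 0) : V g ≠ ⊤ := by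
  obtain ⟨i, hi⟩ : ∃ i, PowerSeries.coeff (R := R) i g ≠ 0 := by
    by_contra hc
    push_neg at hc
    exact hg (PowerSeries.ext fun i => by simpa using hc i)
  intro ht
  have : IsDiscreteValuationRing.addVal R (PowerSeries.coeff (R := R) i g) = ⊤ := by
    have h1 : V g ≤ IsDiscreteValuationRing.addVal R (PowerSeries.coeff (R := R) i g) := iInf_le _ i
    rw [ht, top_le_iff] at h1
    exact h1
  exact hi (IsDiscreteValuationRing.addVal_eq_top_iff.mp this)

lemma pow_dvd_of_le_VtoNat {π : R} (hπ : Irreducible π) {g : PowerSeries R} (hg : g ≠ 0)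
    {n : ℕ} (hn : n ≤ (V g).toNat) : (PowerSeries.C (R := R) π) ^ n ∣ g := by
  rw [← coe_le_V_iff hπ]
  calc (n : ℕ∞) ≤ ((V g).toNat : ℕ∞) := Nat.cast_le.mpr hn
    _ = V g := ENat.coe_toNat (V_ne_top hg)

/-- `k[[X]]` is `X`-adically Hausdorff. -/
lemma psX_haus (k : Type*) [CommRing k] :
    IsHausdorff (Ideal.span {(PowerSeries.X : PowerSeries k)}) (PowerSeries k) := by
  constructor
  intro x hx
  ext i
  have h1 := hx (i + 1)
  simp only [← Ideal.one_eq_top, smul_eq_mul, mul_one, SModEq.zero,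
    Ideal.span_singleton_pow, Ideal.mem_span_singleton] at h1
  rw [PowerSeries.X_pow_dvd_iff] at h1
  simpa using h1 i (by omega)

/-- `k[[X]]` is `X`-adically precomplete. -/
lemma psX_prec (k : Type*) [CommRing k] :
    IsPrecomplete (Ideal.span {(PowerSeries.X : PowerSeries k)}) (PowerSeries k) := by
  constructor
  intro F hF
  refine ⟨PowerSeries.mk fun i => PowerSeries.coeff (R := k) i (F (i + 1)), fun n => ?_⟩
  simp only [← Ideal.one_eq_top, smul_eq_mul, mul_one, SModEq.sub_mem,
    Ideal.span_singleton_pow, Ideal.mem_span_singleton, PowerSeries.X_pow_dvd_iff]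
  intro m hm
  have h1 := hF (show m + 1 ≤ n by omega)
  simp only [← Ideal.one_eq_top, smul_eq_mul, mul_one, SModEq.sub_mem,
    Ideal.span_singleton_pow, Ideal.mem_span_singleton, PowerSeries.X_pow_dvd_iff] at h1
  have h2 := h1 m (by omega)
  simp only [map_sub] at h2 ⊢
  rw [PowerSeries.coeff_mk, sub_eq_zero]
  rw [sub_eq_zero] at h2
  exact h2.symm

/-- `k[[X]]` is `X`-adically complete. -/
lemma psX_adicComplete (k : Type*) [CommRing k] :
    IsAdicComplete (Ideal.span {(PowerSeries.X : PowerSeries k)}) (PowerSeries k) :=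
  letI := psX_haus k
  letI := psX_prec k
  ⟨⟩

/-- Artin–Schreier-type equations are solvable over `k[[t]]`, `k` algebraically closed of
characteristic `p`. -/
lemma AS_solvable {k : Type*} [Field k] [IsAlgClosed k] {p : ℕ} (hp : p.Prime)
    (hch : CharP k p) (c b : PowerSeries k) (hc : IsUnit c) :
    ∃ x : PowerSeries k, x ^ p + c * x = b := by
  haveI := psX_adicComplete k
  set I : Ideal (PowerSeries k) := Ideal.span {(PowerSeries.X : PowerSeries k)} with hI
  set F : Polynomial (PowerSeries k) :=
    Polynomial.X ^ p + (Polynomial.C c * Polynomial.X - Polynomial.C b) with hF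
  have hmonic : F.Monic := by
    apply Polynomial.monic_X_pow_add
    calc (Polynomial.C c * Polynomial.X - Polynomial.C b).degree
        ≤ max (Polynomial.C c * Polynomial.X).degree (Polynomial.C b).degree :=
          Polynomial.degree_sub_le _ _
      _ ≤ 1 := by
          apply max_le
          · exact (Polynomial.degree_mul_le _ _).trans
              (by simpa using add_le_add Polynomial.degree_C_le (le_refl (Polynomial.X : Polynomial (PowerSeries k)).degree))
          · exact Polynomial.degree_C_le.trans (by norm_num)
      _ < p := by exact_mod_cast hp.one_lt
  set c0 := PowerSeries.constantCoeff (R := k) c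
  set b0 := PowerSeries.constantCoeff (R := k) b
  set G : Polynomial k :=
    Polynomial.X ^ p + (Polynomial.C c0 * Polynomial.X - Polynomial.C b0) with hG
  have hGdeg : G.degree ≠ 0 := by
    have h2 : (Polynomial.C c0 * Polynomial.X - Polynomial.C b0).degree < (p : WithBot ℕ) := by
      calc (Polynomial.C c0 * Polynomial.X - Polynomial.C b0).degree
          ≤ max (Polynomial.C c0 * Polynomial.X).degree (Polynomial.C b0).degree :=
            Polynomial.degree_sub_le _ _
        _ ≤ 1 := by
            apply max_le
            · exact (Polynomial.degree_mul_le _ _).trans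
                (by simpa using add_le_add Polynomial.degree_C_le (le_refl (Polynomial.X : Polynomial k).degree))
            · exact Polynomial.degree_C_le.trans (by norm_num)
        _ < p := by exact_mod_cast hp.one_lt
    have h3 : G.degree = p := by
      rw [hG]
      rw [Polynomial.degree_add_eq_left_of_degree_lt (by simpa using h2)]
      simp
    rw [h3]
    exact_mod_cast hp.ne_zero
  obtain ⟨α, hα⟩ := IsAlgClosed.exists_root G hGdeg
  set a₀ : PowerSeries k := PowerSeries.C (R := k) α with ha₀
  have hcc : PowerSeries.constantCoeff (R := k) a₀ = α := by rw [ha₀]; exact PowerSeries.constantCoeff_C α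
  have hps : ((p : ℕ) : PowerSeries k) = 0 := by
    have : ((p : ℕ) : k) = 0 := CharP.cast_eq_zero k p
    rw [← map_natCast (PowerSeries.C (R := k)) p, this, map_zero]
  have hmem : F.eval a₀ ∈ I := by
    rw [hI, Ideal.mem_span_singleton, PowerSeries.X_dvd_iff]
    have : PowerSeries.constantCoeff (R := k) (F.eval a₀) = G.eval α := by
      rw [hF, hG]
      simp only [Polynomial.eval_add, Polynomial.eval_sub, Polynomial.eval_mul,
        Polynomial.eval_pow, Polynomial.eval_X, Polynomial.eval_C, map_add, map_sub, map_mul,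
        map_pow, hcc]
      rfl
    rw [this]
    exact hα
  have hder : F.derivative.eval a₀ = (p : PowerSeries k) * a₀ ^ (p - 1) + c := by
    rw [hF, Polynomial.derivative_add, Polynomial.derivative_sub, Polynomial.derivative_X_pow,
      Polynomial.derivative_C_mul_X, Polynomial.derivative_C, sub_zero]
    simp only [Polynomial.eval_add, Polynomial.eval_mul, Polynomial.eval_pow,
      Polynomial.eval_X, Polynomial.eval_C]
  have hunit : IsUnit (Ideal.Quotient.mk I (F.derivative.eval a₀)) := by
    rw [hder, hps, zero_mul, zero_add]
    exact hc.map _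
  obtain ⟨a, ha, -⟩ := HenselianRing.is_henselian F hmonic a₀ hmem hunit
  refine ⟨a, ?_⟩
  have h4 : F.eval a = 0 := ha
  rw [hF] at h4
  simp only [Polynomial.eval_add, Polynomial.eval_sub, Polynomial.eval_mul, Polynomial.eval_pow,
    Polynomial.eval_X, Polynomial.eval_C] at h4
  linear_combination h4


/-- Lift Artin–Schreier solvability modulo `π` to `R[[t]]`. -/
lemma AS_lift {R : Type*} [CommRing R] [IsDomain R] [IsDiscreteValuationRing R]
    {p : ℕ} (hp : p.Prime) (hch : CharP (IsLocalRing.ResidueField R) p)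
    (hac : IsAlgClosed (IsLocalRing.ResidueField R))
    {π : R} (hπ : Irreducible π) (c b : PowerSeries R) (hc : IsUnit c) :
    ∃ u : PowerSeries R, (PowerSeries.C (R := R) π) ∣ (u ^ p + c * u - b) := by
  haveI := hac
  set φ : PowerSeries R →+* PowerSeries (IsLocalRing.ResidueField R) :=
    PowerSeries.map (IsLocalRing.residue R) with hφ
  obtain ⟨x, hx⟩ := AS_solvable hp hch (φ c) (φ b) (hc.map φ)
  have hres : Function.Surjective (IsLocalRing.residue R) := Ideal.Quotient.mk_surjective
  refine ⟨PowerSeries.mk fun i => (hres (PowerSeries.coeff i x)).choose, ?_⟩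
  set u : PowerSeries R := PowerSeries.mk fun i => (hres (PowerSeries.coeff i x)).choose with hu
  have hφu : φ u = x := by
    ext i
    rw [hφ, PowerSeries.coeff_map, hu, PowerSeries.coeff_mk]
    exact (hres _).choose_spec
  rw [C_dvd_iff]
  intro i
  have h0 : φ (u ^ p + c * u - b) = 0 := by
    rw [map_sub, map_add, map_mul, map_pow, hφu, hx, sub_self]
  have h1 : IsLocalRing.residue R (PowerSeries.coeff (R := R) i (u ^ p + c * u - b)) = 0 := by
    have h2 : PowerSeries.coeff i (φ (u ^ p + c * u - b)) = 0 := by rw [h0]; simp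
    rwa [hφ, PowerSeries.coeff_map] at h2
  have h3 : PowerSeries.coeff (R := R) i (u ^ p + c * u - b) ∈ IsLocalRing.maximalIdeal R :=
    Ideal.Quotient.eq_zero_iff_mem.mp h1
  rwa [hπ.maximalIdeal_eq, Ideal.mem_span_singleton] at h3


/-- The key improvement step: if `f - h^p` is divisible by `π^n` with
`n ≥ pe/(p-1)`, then the approximation can be improved. -/
lemma step {R : Type*} [CommRing R] [IsDomain R] [IsDiscreteValuationRing R]
    {p : ℕ} (hp : p.Prime) (hch : CharP (IsLocalRing.ResidueField R) p)
    (hac : IsAlgClosed (IsLocalRing.ResidueField R))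
    {π : R} (hπ : Irreducible π) {w : R} (hw : IsUnit w) {e : ℕ} (he : 1 ≤ e)
    (hpw : (p : R) = w * π ^ e)
    (f h : PowerSeries R) (hh : IsUnit h) (n : ℕ) (hn : p * e ≤ n * (p - 1))
    (hdvd : (PowerSeries.C (R := R) π) ^ n ∣ f - h ^ p) :
    ∃ h' : PowerSeries R, IsUnit h' ∧ (PowerSeries.C (R := R) π) ^ (n + 1) ∣ f - h' ^ p ∧
      (PowerSeries.C (R := R) π) ^ (n - e) ∣ h' - h := by
  have hp2 : 2 ≤ p := hp.two_le
  have hpe : p - 1 + 1 = p := by omega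
  have hmul : p * e = e * (p - 1) + e := by
    calc p * e = (p - 1 + 1) * e := by rw [hpe]
      _ = e * (p - 1) + e := by ring
  have hen : e < n := by
    by_contra hcon
    push_neg at hcon
    have h1 : n * (p - 1) ≤ e * (p - 1) := Nat.mul_le_mul_right _ hcon
    linarith
  obtain ⟨s, hns⟩ : ∃ s, n = e + s := ⟨n - e, by omega⟩
  have hs1 : 1 ≤ s := by omega
  have hnme : n - e = s := by omega
  have hps : n ≤ p * s := by
    have h3 : n * (p - 1) + n = n * p := by
      calc n * (p - 1) + n = n * (p - 1 + 1) := by ring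
        _ = n * p := by rw [hpe]
    have h4 : p * s + p * e = p * n := by rw [hns]; ring
    have h5 : n * p = p * n := Nat.mul_comm _ _
    linarith
  have he2s : n + 1 ≤ e + 2 * s := by omega
  obtain ⟨g₁, hg₁⟩ := hdvd
  set Cπ : PowerSeries R := PowerSeries.C (R := R) π with hCπ
  set c : PowerSeries R := PowerSeries.C (R := R) w * h ^ (p - 1) with hc
  have hcu : IsUnit c := (hw.map (PowerSeries.C (R := R))).mul (hh.pow _)
  have hukey : ∃ u : PowerSeries R, Cπ ∣ (g₁ - c * u - Cπ ^ (p * s - n) * u ^ p) := by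
    rcases eq_or_lt_of_le hps with heq | hlt
    · obtain ⟨u, hu⟩ := AS_lift hp hch hac hπ c g₁ hcu
      refine ⟨u, ?_⟩
      have hzero : p * s - n = 0 := by omega
      rw [hzero, pow_zero, one_mul]
      have hrw : g₁ - c * u - u ^ p = -(u ^ p + c * u - g₁) := by ring
      rw [hrw]
      exact (dvd_neg).mpr hu
    · refine ⟨↑hcu.unit⁻¹ * g₁, ?_⟩
      have h6 : c * (↑hcu.unit⁻¹ * g₁) = g₁ := by
        rw [← mul_assoc, IsUnit.mul_val_inv, one_mul]
      rw [h6]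
      have hrw : g₁ - g₁ - Cπ ^ (p * s - n) * (↑hcu.unit⁻¹ * g₁) ^ p =
          -(Cπ ^ (p * s - n) * (↑hcu.unit⁻¹ * g₁) ^ p) := by ring
      rw [hrw, dvd_neg]
      exact ((dvd_pow_self Cπ (by omega : p * s - n ≠ 0)).mul_right _)
  obtain ⟨u, hu⟩ := hukey
  set x : PowerSeries R := Cπ ^ s * u with hx
  refine ⟨h + x, ?_, ?_, ?_⟩
  · -- h + x is a unit
    by_contra hcon
    have hxm : x ∈ IsLocalRing.maximalIdeal (PowerSeries R) := by
      rw [IsLocalRing.mem_maximalIdeal]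
      intro hux
      have h7 : IsUnit (Cπ ^ s) := isUnit_of_mul_isUnit_left hux
      have h8 : IsUnit Cπ := isUnit_of_dvd_unit (dvd_pow_self Cπ (by omega : s ≠ 0)) h7
      have h9 : IsUnit (PowerSeries.constantCoeff (R := R) Cπ) :=
        PowerSeries.isUnit_constantCoeff _ h8
      rw [hCπ, PowerSeries.constantCoeff_C] at h9
      exact hπ.not_isUnit h9
    have hm : h + x ∈ IsLocalRing.maximalIdeal (PowerSeries R) := by
      rw [IsLocalRing.mem_maximalIdeal]; exact hcon
    have hhm : h ∈ IsLocalRing.maximalIdeal (PowerSeries R) := by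
      have h10 := Ideal.sub_mem _ hm hxm
      simpa using h10
    rw [IsLocalRing.mem_maximalIdeal] at hhm
    exact hhm hh
  · -- main divisibility
    have hbin := add_pow_prime_eq' hp h x
    set T : PowerSeries R := ∑ j ∈ Finset.Ioo 0 p,
      h ^ j * x ^ (p - j) * ((p.choose j / p : ℕ) : PowerSeries R) with hT
    have hmm : (p - 1) ∈ Finset.Ioo 0 p := by
      simp only [Finset.mem_Ioo]
      omega
    set E : PowerSeries R := ∑ j ∈ (Finset.Ioo 0 p).erase (p - 1),
      h ^ j * x ^ (p - j) * ((p.choose j / p : ℕ) : PowerSeries R) with hE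
    have hTsplit : T = h ^ (p - 1) * x + E := by
      rw [hT, hE]
      rw [← Finset.add_sum_erase _
        (fun j => h ^ j * x ^ (p - j) * ((p.choose j / p : ℕ) : PowerSeries R)) hmm]
      congr 1
      have h1 : p - (p - 1) = 1 := by omega
      have h2 : p.choose (p - 1) = p := by
        have h3 := Nat.choose_symm (show 1 ≤ p by omega) (n := p)
        rw [Nat.choose_one_right] at h3
        exact h3
      rw [h1, h2, Nat.div_self hp.pos, Nat.cast_one, mul_one, pow_one]
    have hxxE : x * x ∣ E := by
      rw [hE]
      apply Finset.dvd_sum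
      intro j hj
      have hj2 : 2 ≤ p - j := by
        simp only [Finset.mem_erase, Finset.mem_Ioo] at hj
        omega
      have h11 : x * x ∣ x ^ (p - j) := by
        have h12 : x * x = x ^ 2 := by ring
        rw [h12]
        exact pow_dvd_pow x hj2
      exact (h11.mul_left _).mul_right _
    obtain ⟨E₁, hE₁⟩ := hxxE
    have hpc : ((p : ℕ) : PowerSeries R) = PowerSeries.C (R := R) w * Cπ ^ e := by
      rw [← map_natCast (PowerSeries.C (R := R)) p, hpw, map_mul, map_pow, hCπ]
    have e1 : (Cπ : PowerSeries R) ^ e * Cπ ^ s = Cπ ^ n := by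
      rw [← pow_add]
      congr 1
      omega
    have e2 : (Cπ ^ s * u) ^ p = Cπ ^ n * (Cπ ^ (p * s - n) * u ^ p) := by
      have e2' : s * p = n + (p * s - n) := by
        rw [Nat.mul_comm]
        exact (Nat.add_sub_cancel' hps).symm
      rw [mul_pow, ← pow_mul, e2', pow_add, mul_assoc]
    have hiden : f - (h + x) ^ p =
        (Cπ ^ n * (g₁ - c * u - Cπ ^ (p * s - n) * u ^ p)) - ((p : ℕ) : PowerSeries R) * E := by
      rw [hbin, hTsplit, hpc, hc, hx]
      linear_combination hg₁ - e2 + (-(PowerSeries.C (R := R) w * h ^ (p - 1) * u)) * e1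
    rw [hiden]
    apply dvd_sub
    · rw [pow_succ]
      exact mul_dvd_mul_left _ hu
    · refine (pow_dvd_pow Cπ he2s).trans ?_
      have h13 : ((p : ℕ) : PowerSeries R) * E =
          Cπ ^ (e + 2 * s) * (PowerSeries.C (R := R) w * u * u * E₁) := by
        rw [hpc, hE₁, hx]
        ring
      rw [h13]
      exact Dvd.intro _ rfl
  · have h14 : h + x - h = x := by ring
    rw [h14, hx, hnme]
    exact Dvd.intro _ rfl


/-- The key bound: no unit approximation can reach `π`-adic precision `n` with
`n(p-1) ≥ pe`, otherwise `f` would be a `p`-th power by completeness. -/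
lemma bound {R : Type*} [CommRing R] [IsDomain R] [IsDiscreteValuationRing R]
    [IsAdicComplete (IsLocalRing.maximalIdeal R) R]
    {p : ℕ} (hp : p.Prime) (hch : CharP (IsLocalRing.ResidueField R) p)
    (hac : IsAlgClosed (IsLocalRing.ResidueField R))
    {π : R} (hπ : Irreducible π) {w : R} (hw : IsUnit w) {e : ℕ} (he : 1 ≤ e)
    (hpw : (p : R) = w * π ^ e)
    (f : PowerSeries R) (hnp : ¬ ∃ g : PowerSeries R, g ^ p = f)
    (h : PowerSeries R) (hh : IsUnit h) (n : ℕ) (hn : p * e ≤ n * (p - 1)) :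
    ¬ ((PowerSeries.C (R := R) π) ^ n ∣ f - h ^ p) := by
  intro hdvd
  set Cπ : PowerSeries R := PowerSeries.C (R := R) π with hCπ
  have key : ∀ (m : ℕ) (x : PowerSeries R), IsUnit x → Cπ ^ (n + m) ∣ f - x ^ p →
      ∃ x', IsUnit x' ∧ Cπ ^ (n + m + 1) ∣ f - x' ^ p ∧ Cπ ^ (n + m - e) ∣ x' - x := by
    intro m x hx hdx
    exact step hp hch hac hπ hw he hpw f x hx (n + m)
      (le_trans hn (Nat.mul_le_mul_right _ (by omega))) hdx
  choose! G hG1 hG2 hG3 using key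
  set seq : ℕ → PowerSeries R := fun m => Nat.rec h (fun m xm => G m xm) m with hseq
  have hseq0 : seq 0 = h := rfl
  have hseqS : ∀ m, seq (m + 1) = G m (seq m) := fun m => rfl
  have inv : ∀ m, IsUnit (seq m) ∧ Cπ ^ (n + m) ∣ f - (seq m) ^ p := by
    intro m
    induction m with
    | zero => exact ⟨hseq0 ▸ hh, by rw [hseq0]; simpa using hdvd⟩
    | succ m ih =>
      rw [hseqS]
      exact ⟨hG1 m (seq m) ih.1 ih.2, hG2 m (seq m) ih.1 ih.2⟩
  have hcons : ∀ m, Cπ ^ (n + m - e) ∣ seq (m + 1) - seq m := fun m =>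
    (hseqS m) ▸ hG3 m (seq m) (inv m).1 (inv m).2
  have htel : ∀ m l, Cπ ^ (n + m - e) ∣ seq (m + l) - seq m := by
    intro m l
    induction l with
    | zero => simpa using dvd_zero _
    | succ l ih =>
      have h1 : seq (m + (l + 1)) - seq m =
          (seq ((m + l) + 1) - seq (m + l)) + (seq (m + l) - seq m) := by
        have h2 : m + (l + 1) = (m + l) + 1 := rfl
        rw [h2]; ring
      rw [h1]
      exact dvd_add ((pow_dvd_pow _ (by omega)).trans (hcons (m + l))) ih
  have hex : ∀ i : ℕ, ∃ Li : R, ∀ m : ℕ,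
      PowerSeries.coeff (R := R) i (seq (m + e)) ≡ Li
        [SMOD ((IsLocalRing.maximalIdeal R) ^ m • ⊤ : Submodule R R)] := by
    intro i
    apply IsPrecomplete.prec (IsAdicComplete.toIsPrecomplete)
    intro m m' hmm'
    simp only [← Ideal.one_eq_top, smul_eq_mul, mul_one, SModEq.sub_mem, hπ.maximalIdeal_eq,
      Ideal.span_singleton_pow, Ideal.mem_span_singleton]
    have h2 : Cπ ^ (n + m) ∣ seq (m' + e) - seq (m + e) := by
      have h3 : m' + e = (m + e) + (m' - m) := by omega
      rw [h3]
      exact (pow_dvd_pow _ (by omega : n + m ≤ n + (m + e) - e)).trans (htel (m + e) (m' - m))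
    have h4 : π ^ (n + m) ∣ PowerSeries.coeff (R := R) i (seq (m' + e) - seq (m + e)) := by
      have h5 : (PowerSeries.C (R := R) (π ^ (n + m))) ∣ seq (m' + e) - seq (m + e) := by
        rwa [map_pow]
      exact (C_dvd_iff _ _).mp h5 i
    rw [map_sub] at h4
    have h6 : π ^ m ∣ PowerSeries.coeff (R := R) i (seq (m' + e)) - PowerSeries.coeff (R := R) i (seq (m + e)) :=
      (pow_dvd_pow π (by omega)).trans h4
    have h7 := dvd_neg.mpr h6
    rw [neg_sub] at h7
    exact h7
  choose L hL using hex
  set Hs : PowerSeries R := PowerSeries.mk L with hHs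
  have hclose : ∀ m : ℕ, Cπ ^ m ∣ Hs - seq (m + e) := by
    intro m
    rw [hCπ, ← map_pow, C_dvd_iff]
    intro i
    have h4 := hL i m
    simp only [← Ideal.one_eq_top, smul_eq_mul, mul_one, SModEq.sub_mem, hπ.maximalIdeal_eq,
      Ideal.span_singleton_pow, Ideal.mem_span_singleton] at h4
    rw [map_sub, hHs, PowerSeries.coeff_mk]
    have h8 := dvd_neg.mpr h4
    rw [neg_sub] at h8
    exact h8
  have hall : ∀ m : ℕ, Cπ ^ m ∣ f - Hs ^ p := by
    intro m
    have h5 : Cπ ^ m ∣ f - (seq (m + e)) ^ p :=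
      (pow_dvd_pow _ (by omega : m ≤ n + (m + e))).trans (inv (m + e)).2
    have h6 : Cπ ^ m ∣ (seq (m + e)) ^ p - Hs ^ p := by
      have h7 : seq (m + e) - Hs ∣ (seq (m + e)) ^ p - Hs ^ p :=
        sub_dvd_pow_sub_pow _ _ p
      have h8 : Cπ ^ m ∣ seq (m + e) - Hs := by
        have h9 := dvd_neg.mpr (hclose m)
        rwa [neg_sub] at h9
      exact h8.trans h7
    have h10 := dvd_add h5 h6
    have h11 : f - (seq (m + e)) ^ p + ((seq (m + e)) ^ p - Hs ^ p) = f - Hs ^ p := by ring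
    rwa [h11] at h10
  have hzero : f - Hs ^ p = 0 := by
    ext i
    rw [map_zero]
    apply eq_zero_of_forall_pow_dvd hπ
    intro m
    have h12 : (PowerSeries.C (R := R) (π ^ m)) ∣ f - Hs ^ p := by rw [map_pow]; exact hall m
    exact (C_dvd_iff _ _).mp h12 i
  exact hnp ⟨Hs, by linear_combination -hzero⟩

end Stmt8Aux

/-- Let `A = R[[t]]` with `R` a complete discrete valuation ring of mixed characteristic
`(0,p)`, the valuation normalized by `v(p) = 1`.  Let `f ∈ A^×` be a unit which is not a
`p`-th power in `A`, and suppose the special fiber of the normalization `B` of `A` in the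
Kummer extension `Frac(A)(f^{1/p})` is reduced.  Then
`μ := sup { v₀(f - h^p) : h ∈ A^× }` exists and satisfies `μ < p/(p-1)`. -/
theorem stmt8 (R : Type*) [CommRing R] [IsDomain R] [IsDiscreteValuationRing R]
    [IsAdicComplete (IsLocalRing.maximalIdeal R) R] [CharZero R]
    (p : ℕ) (hp : p.Prime) [CharP (IsLocalRing.ResidueField R) p]
    [IsAlgClosed (IsLocalRing.ResidueField R)]
    (π : R) (hπ : Irreducible π)
    (f : PowerSeries R) (hf : IsUnit f) (hnp : ¬ ∃ g : PowerSeries R, g ^ p = f)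
    -- the Kummer extension `L = Frac(A)(y)`, `y^p = f`, of the fraction field `K` of `A`
    (K : Type*) [Field K] [Algebra (PowerSeries R) K] [IsFractionRing (PowerSeries R) K]
    (L : Type*) [Field L] [Algebra K L] [Algebra (PowerSeries R) L]
    [IsScalarTower (PowerSeries R) K L] [FiniteDimensional K L]
    (hrank : Module.finrank K L = p)
    (y : L) (hy : y ^ p = algebraMap (PowerSeries R) L f)
    -- the special fiber of the normalization `B` of `A` in `L` is reduced
    (hred : IsReduced ((integralClosure (PowerSeries R) L) ⧸
      Ideal.span {algebraMap (PowerSeries R) (integralClosure (PowerSeries R) L)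
        (PowerSeries.C (R := R) π)})) :
    ∃ μ : ℚ,
      IsLUB {q : ℚ | ∃ h : PowerSeries R, IsUnit h ∧ q = gaussV0 R (p : R) (f - h ^ p)} μ ∧
      μ < (p : ℚ) / ((p : ℚ) - 1) := by
  classical
  have hpne : (p : R) ≠ 0 := Nat.cast_ne_zero.mpr hp.ne_zero
  obtain ⟨e, wu, hpw'⟩ := IsDiscreteValuationRing.eq_unit_mul_pow_irreducible hpne hπ
  have hval : IsDiscreteValuationRing.addVal R (p : R) = e :=
    IsDiscreteValuationRing.addVal_def (p : R) wu hπ e hpw'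
  have htoNat : (IsDiscreteValuationRing.addVal R (p : R)).toNat = e := by
    rw [hval]; simp
  have hw : IsUnit (wu : R) := wu.isUnit
  have he : 1 ≤ e := by
    by_contra hcon
    have he0 : e = 0 := by omega
    rw [he0, pow_zero, mul_one] at hpw'
    have hunit : IsUnit (p : R) := hpw' ▸ hw
    have hzero : IsLocalRing.residue R (p : R) = 0 := by
      rw [map_natCast]
      exact CharP.cast_eq_zero _ p
    have h1 := hunit.map (IsLocalRing.residue R)
    rw [hzero] at h1
    exact not_isUnit_zero h1
  have hp2 : 2 ≤ p := hp.two_le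
  have hpe1 : 1 ≤ p * e := Nat.one_le_iff_ne_zero.mpr (Nat.mul_ne_zero (by omega) (by omega))
  set N : ℕ := (p * e - 1) / (p - 1) with hN
  have hNlt : N * (p - 1) < p * e :=
    lt_of_le_of_lt (Nat.div_mul_le_self _ _) (Nat.sub_lt (by omega) one_pos)
  have hNsucc : p * e ≤ (N + 1) * (p - 1) := by
    have h1 : p * e - 1 < (N + 1) * (p - 1) :=
      (Nat.div_lt_iff_lt_mul (show 0 < p - 1 by omega)).mp (show N < N + 1 by omega)
    have h2 : p * e - 1 + 1 ≤ (N + 1) * (p - 1) := h1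
    rwa [Nat.sub_add_cancel hpe1] at h2
  have hg0 : ∀ h : PowerSeries R, f - h ^ p ≠ 0 := by
    intro h h0
    exact hnp ⟨h, by linear_combination -h0⟩
  have hTbound : ∀ h : PowerSeries R, IsUnit h → (Stmt8Aux.V (f - h ^ p)).toNat ≤ N := by
    intro h hh
    by_contra hcon
    push_neg at hcon
    have hdvd := Stmt8Aux.pow_dvd_of_le_VtoNat hπ (hg0 h) (show N + 1 ≤ _ by omega)
    exact Stmt8Aux.bound hp inferInstance inferInstance hπ hw he hpw' f hnp h hh
      (N + 1) hNsucc hdvd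
  set T : Set ℕ := {m | ∃ h : PowerSeries R, IsUnit h ∧ (Stmt8Aux.V (f - h ^ p)).toNat = m}
    with hT
  have hTne : T.Nonempty := ⟨_, 1, isUnit_one, rfl⟩
  have hTbdd : BddAbove T := by
    refine ⟨N, ?_⟩
    rintro m ⟨h, hh, rfl⟩
    exact hTbound h hh
  have hMT : sSup T ∈ T := Nat.sSup_mem hTne hTbdd
  have hMN : sSup T ≤ N := by
    obtain ⟨h, hh, hm⟩ := hMT
    exact hm ▸ hTbound h hh
  have he' : (0 : ℚ) < (e : ℚ) := by exact_mod_cast Nat.lt_of_lt_of_le Nat.zero_lt_one he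
  refine ⟨((sSup T : ℕ) : ℚ) / (e : ℚ), ⟨?_, ?_⟩, ?_⟩
  · rintro q ⟨h, hh, rfl⟩
    rw [Stmt8Aux.gaussV0_eq, htoNat]
    have h1 : (Stmt8Aux.V (f - h ^ p)).toNat ≤ sSup T := le_csSup hTbdd ⟨h, hh, rfl⟩
    exact (div_le_div_iff_of_pos_right he').mpr (by exact_mod_cast h1)
  · intro b hb
    obtain ⟨h, hh, hm⟩ := hMT
    have h2 : ((sSup T : ℕ) : ℚ) / (e : ℚ) = gaussV0 R (p : R) (f - h ^ p) := by
      rw [Stmt8Aux.gaussV0_eq, htoNat, hm]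
    rw [h2]
    exact hb ⟨h, hh, rfl⟩
  · have hp1 : (0 : ℚ) < (p : ℚ) - 1 := by
      have h3 : (1 : ℚ) < p := by exact_mod_cast hp.one_lt
      linarith
    rw [div_lt_div_iff₀ he' hp1]
    have hcast : ((p : ℚ) - 1) = ((p - 1 : ℕ) : ℚ) := by
      rw [Nat.cast_sub (by omega : 1 ≤ p)]
      norm_num
    rw [hcast]
    have h2 : (sSup T) * (p - 1) < p * e := lt_of_le_of_lt (Nat.mul_le_mul_right _ hMN) hNlt
    exact_mod_cast h2
end

section
/- Let $R$ be a complete discrete valuation ring of mixed characteristic $(0,p)$ with valuation $v$, $v(p)=1$, and let $A = R[[t]]$. Let $f \in A^\times$, $h \in A^\times$, and suppose $v_0(f - h^p) > p/(p-1)$, where $v_0(\sum g_i t^i) = \min_i v(g_i)$. Then $f$ is a $p$-th power in $A$. -/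
open PowerSeries

open IsDiscreteValuationRing

section Helpers
variable {R : Type*} [CommRing R] [IsDomain R] [IsDiscreteValuationRing R]

noncomputable def gaussV (d : PowerSeries R) : ℕ∞ := ⨅ i : ℕ, addVal R (coeff i d)

lemma gaussV_le (d : PowerSeries R) (i : ℕ) : gaussV d ≤ addVal R (coeff i d) := iInf_le _ i

lemma le_gaussV_iff {n : ℕ∞} {d : PowerSeries R} :
    n ≤ gaussV d ↔ ∀ i, n ≤ addVal R (coeff i d) := le_iInf_iff

lemma addVal_sum {ι : Type*} (s : Finset ι) (g : ι → R) {n : ℕ∞}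
    (h : ∀ i ∈ s, n ≤ addVal R (g i)) : n ≤ addVal R (∑ i ∈ s, g i) := by
  classical
  induction s using Finset.cons_induction with
  | empty => simp [addVal_zero]
  | cons a s ha ih =>
    rw [Finset.sum_cons]
    exact le_trans (le_min (h a (Finset.mem_cons_self _ _))
      (ih fun i hi => h i (Finset.mem_cons_of_mem hi))) addVal_add

lemma le_gaussV_mul {m n : ℕ∞} {a b : PowerSeries R} (hm : m ≤ gaussV a) (hn : n ≤ gaussV b) :
    m + n ≤ gaussV (a * b) := by
  rw [le_gaussV_iff]
  intro i
  rw [PowerSeries.coeff_mul]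
  apply addVal_sum
  intro x _
  rw [addVal_mul]
  exact add_le_add (hm.trans (gaussV_le a x.1)) (hn.trans (gaussV_le b x.2))

lemma le_gaussV_pow {m : ℕ∞} {a : PowerSeries R} (h : m ≤ gaussV a) (n : ℕ) :
    n • m ≤ gaussV (a ^ n) := by
  induction n with
  | zero => simp
  | succ k ih =>
    rw [pow_succ, succ_nsmul]
    exact le_gaussV_mul ih h

lemma addVal_neg (x : R) : addVal R (-x) = addVal R x := by
  have h1 : addVal R (-1 : R) = 0 := by
    have h := addVal_mul (R := R) (a := (-1 : R)) (b := (-1 : R))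
    rw [neg_mul_neg, one_mul, addVal_one] at h
    exact (add_eq_zero.mp h.symm).1
  rw [show -x = -1 * x by ring, addVal_mul, h1, zero_add]

lemma gaussV_neg (d : PowerSeries R) : gaussV (-d) = gaussV d := by
  unfold gaussV
  congr 1; ext i
  rw [map_neg, addVal_neg]

lemma le_gaussV_sum {ι : Type*} (s : Finset ι) (g : ι → PowerSeries R) {n : ℕ∞}
    (h : ∀ i ∈ s, n ≤ gaussV (g i)) : n ≤ gaussV (∑ i ∈ s, g i) := by
  rw [le_gaussV_iff]
  intro i
  rw [map_sum]
  exact addVal_sum _ _ fun j hj => (h j hj).trans (gaussV_le _ i)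

lemma addVal_le_gaussV_C (r : R) : addVal R r ≤ gaussV (C r) := by
  rw [le_gaussV_iff]
  intro i
  rw [PowerSeries.coeff_C]
  split
  · exact le_rfl
  · rw [addVal_zero]; exact le_top

lemma C_dvd_of_forall {r : R} {w : PowerSeries R} (h : ∀ i, r ∣ coeff i w) :
    ∃ c, C r * c = w := by
  refine ⟨PowerSeries.mk fun i => (h i).choose, ?_⟩
  ext i
  rw [PowerSeries.coeff_C_mul, PowerSeries.coeff_mk]
  exact ((h i).choose_spec).symm

lemma mem_maximalIdeal_pow_iff {x : R} {n : ℕ} :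
    x ∈ IsLocalRing.maximalIdeal R ^ n ↔ (n : ℕ∞) ≤ addVal R x := by
  obtain ⟨π, hπ⟩ := exists_irreducible R
  rw [hπ.maximalIdeal_eq, Ideal.span_singleton_pow, Ideal.mem_span_singleton,
    ← addVal_le_iff_dvd, hπ.addVal_pow]

end Helpers

section Key
variable {R : Type*} [CommRing R] [IsDomain R] [IsDiscreteValuationRing R]

lemma key_step {p e N : ℕ} (hp : p.Prime) (he : addVal R ((p : ℕ) : R) = (e : ℕ∞))
    (heN : e + 1 ≤ N) (hN : p * e + 1 ≤ (p - 1) * N)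
    (f x : PowerSeries R) (hx : IsUnit x) (hdV : (N : ℕ∞) ≤ gaussV (f - x ^ p)) :
    ∃ y : PowerSeries R, IsUnit y ∧ ((N - e : ℕ) : ℕ∞) ≤ gaussV (y - x) ∧
      ((N + 1 : ℕ) : ℕ∞) ≤ gaussV (f - y ^ p) := by
  obtain ⟨m, rfl⟩ : ∃ m, p = m + 2 := ⟨p - 2, by have := hp.two_le; omega⟩
  set u : PowerSeries R := ↑hx.unit⁻¹ with hu_def
  have hxu : x * u = 1 := by
    have := hx.unit.mul_inv
    rwa [hx.unit_spec] at this
  set d := f - x ^ (m + 2) with hd_def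
  have hdu : (N : ℕ∞) ≤ gaussV (d * u ^ (m + 1)) := by
    simpa using le_gaussV_mul hdV (zero_le : (0 : ℕ∞) ≤ gaussV (u ^ (m + 1)))
  have hdiv : ∀ i, (((m + 2 : ℕ) : R)) ∣ coeff i (d * u ^ (m + 1)) := by
    intro i
    rw [← addVal_le_iff_dvd, he]
    refine le_trans ?_ (hdu.trans (gaussV_le _ i))
    exact Nat.cast_le.mpr (by omega)
  obtain ⟨c, hc⟩ := C_dvd_of_forall hdiv
  have hcV : ((N - e : ℕ) : ℕ∞) ≤ gaussV c := by
    rw [le_gaussV_iff]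
    intro i
    have h1 : (N : ℕ∞) ≤ addVal R (coeff i (C ((m + 2 : ℕ) : R) * c)) := by
      rw [hc]; exact hdu.trans (gaussV_le _ i)
    rw [PowerSeries.coeff_C_mul, addVal_mul, he] at h1
    have h2 : ((N - e : ℕ) : ℕ∞) = (N : ℕ∞) - (e : ℕ∞) := by
      simp [Nat.cast_sub (by omega : e ≤ N)]
    rw [h2]
    exact tsub_le_iff_left.mpr h1
  have hc0 : constantCoeff c ∈ IsLocalRing.maximalIdeal R := by
    rw [show (IsLocalRing.maximalIdeal R) = (IsLocalRing.maximalIdeal R) ^ 1 by rw [pow_one],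
      mem_maximalIdeal_pow_iff]
    refine le_trans ?_ ((hcV.trans (gaussV_le c 0)).trans_eq (by rw [PowerSeries.coeff_zero_eq_constantCoeff]))
    exact_mod_cast (by omega : 1 ≤ N - e)
  have hmid : x ^ (m + 1) * c * ((m + 2 : ℕ) : PowerSeries R) = d := by
    rw [show ((m + 2 : ℕ) : PowerSeries R) = C ((m + 2 : ℕ) : R) from (map_natCast C _).symm]
    calc x ^ (m + 1) * c * C ((m + 2 : ℕ) : R)
        = (C ((m + 2 : ℕ) : R) * c) * x ^ (m + 1) := by ring
      _ = d * u ^ (m + 1) * x ^ (m + 1) := by rw [hc]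
      _ = d * (x * u) ^ (m + 1) := by rw [mul_pow]; ring
      _ = d := by rw [hxu, one_pow, mul_one]
  refine ⟨x + c, ?_, ?_, ?_⟩
  · rw [PowerSeries.isUnit_iff_constantCoeff, map_add]
    by_contra hcon
    have hmemsum : constantCoeff x + constantCoeff c ∈ IsLocalRing.maximalIdeal R :=
      (IsLocalRing.mem_maximalIdeal _).mpr hcon
    have : constantCoeff x ∈ IsLocalRing.maximalIdeal R := by
      simpa using (IsLocalRing.maximalIdeal R).sub_mem hmemsum hc0
    exact (IsLocalRing.mem_maximalIdeal _).mp this (PowerSeries.isUnit_constantCoeff x hx)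
  · rw [add_sub_cancel_left]; exact hcV
  · have hfy : f - (x + c) ^ (m + 2) =
        -∑ k ∈ Finset.range (m + 1), x ^ k * c ^ (m + 2 - k) * (((m + 2).choose k : ℕ) : PowerSeries R) := by
      have hbin := add_pow x c (m + 2)
      rw [Finset.sum_range_succ, Finset.sum_range_succ] at hbin
      have h1 : x ^ (m + 1) * c ^ (m + 2 - (m + 1)) * (((m + 2).choose (m + 1) : ℕ) : PowerSeries R) = d := by
        have e1 : m + 2 - (m + 1) = 1 := by omega
        rw [e1, Nat.choose_succ_self_right, pow_one]
        exact hmid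
      have h2 : x ^ (m + 2) * c ^ (m + 2 - (m + 2)) * (((m + 2).choose (m + 2) : ℕ) : PowerSeries R)
          = x ^ (m + 2) := by
        simp
      rw [h1, h2] at hbin
      rw [hbin, hd_def]
      ring
    rw [hfy, gaussV_neg]
    apply le_gaussV_sum
    intro k hk
    rw [Finset.mem_range] at hk
    rcases Nat.eq_zero_or_pos k with hk0 | hk1
    · subst hk0
      have hCk : (0 : ℕ∞) ≤ gaussV ((((m + 2).choose 0 : ℕ)) : PowerSeries R) := zero_le
      have htot := le_gaussV_mul (le_gaussV_mul (zero_le : (0 : ℕ∞) ≤ gaussV (x ^ 0)) (le_gaussV_pow hcV (m + 2 - 0))) hCk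
      refine le_trans ?_ htot
      rw [zero_add, add_zero, show ((m + 2 - 0) • ((N - e : ℕ) : ℕ∞)) = (((m + 2) * (N - e) : ℕ) : ℕ∞) by
        rw [nsmul_eq_mul]; push_cast; ring]
      rw [Nat.cast_le]
      obtain ⟨D, hD⟩ : ∃ D, N = e + D + 1 := ⟨N - e - 1, by omega⟩
      subst hD
      have hsub : e + D + 1 - e = D + 1 := by omega
      rw [hsub]
      have hN' : (m + 2) * e + 1 ≤ (m + 1) * (e + D + 1) := hN
      nlinarith [hN']
    · have hdvd : (((m + 2 : ℕ)) : R) ∣ (((m + 2).choose k : ℕ) : R) :=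
        Nat.cast_dvd_cast (Nat.Prime.dvd_choose_self hp (by omega) (by omega))
      have hCk : (e : ℕ∞) ≤ gaussV ((((m + 2).choose k : ℕ)) : PowerSeries R) := by
        rw [show ((((m + 2).choose k : ℕ)) : PowerSeries R) = C (((m + 2).choose k : ℕ) : R) from
          (map_natCast C _).symm]
        exact le_trans (he ▸ addVal_le_iff_dvd.mpr hdvd) (addVal_le_gaussV_C _)
      have htot := le_gaussV_mul (le_gaussV_mul (zero_le : (0 : ℕ∞) ≤ gaussV (x ^ k)) (le_gaussV_pow hcV (m + 2 - k))) hCk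
      refine le_trans ?_ htot
      rw [zero_add, show ((m + 2 - k) • ((N - e : ℕ) : ℕ∞)) = (((m + 2 - k) * (N - e) : ℕ) : ℕ∞) by
        rw [nsmul_eq_mul]; push_cast; ring]
      rw [← Nat.cast_add, Nat.cast_le]
      have h2 : 2 * (N - e) ≤ (m + 2 - k) * (N - e) := Nat.mul_le_mul_right _ (by omega)
      omega
end Key

section More
variable {R : Type*} [CommRing R] [IsDomain R] [IsDiscreteValuationRing R]

lemma le_gaussV_add {n : ℕ∞} {a b : PowerSeries R} (ha : n ≤ gaussV a) (hb : n ≤ gaussV b) :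
    n ≤ gaussV (a + b) := by
  rw [le_gaussV_iff]
  intro i
  rw [map_add]
  exact le_trans (le_min (ha.trans (gaussV_le a i)) (hb.trans (gaussV_le b i))) addVal_add

lemma smod_top_iff {x y : R} {n : ℕ} :
    x ≡ y [SMOD ((IsLocalRing.maximalIdeal R) ^ n • ⊤ : Submodule R R)] ↔
      (n : ℕ∞) ≤ addVal R (x - y) := by
  rw [SModEq.sub_mem, ← Ideal.one_eq_top, smul_eq_mul, mul_one, mem_maximalIdeal_pow_iff]

end More

/-- Let `R` be a complete discrete valuation ring of mixed characteristic `(0,p)` with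
(additive) valuation `v`, normalized below via the value `e := v p` (so that the Gauss
valuation `v₀` on `A = R[[t]]`, given by the minimum of the valuations of the coefficients,
is normalized by `v₀ p = 1` after dividing by `e`).  If `f, h ∈ A` are units and
`v₀ (f - h^p) > p/(p-1)`, i.e. `(p-1) · min_i v (coeff i (f - h^p)) > p · e`,
then `f` is a `p`-th power in `A`. -/
theorem stmt9 (R : Type*) [CommRing R] [IsDomain R] [IsDiscreteValuationRing R]
    [IsAdicComplete (IsLocalRing.maximalIdeal R) R] [CharZero R]
    (p : ℕ) (hp : p.Prime) [CharP (IsLocalRing.ResidueField R) p]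
    (f h : PowerSeries R) (hf : IsUnit f) (hh : IsUnit h)
    (hv : (p : ℕ∞) * (IsDiscreteValuationRing.addVal R (p : R)) <
      ((p - 1 : ℕ) : ℕ∞) *
        ⨅ i : ℕ, IsDiscreteValuationRing.addVal R (PowerSeries.coeff i (f - h ^ p))) :
    ∃ g : PowerSeries R, g ^ p = f := by
  classical
  by_cases hd0 : f - h ^ p = 0
  · exact ⟨h, (sub_eq_zero.mp hd0).symm⟩
  have hVd : (⨅ i : ℕ, addVal R (coeff i (f - h ^ p))) = gaussV (f - h ^ p) := rfl
  have hpR : ((p : ℕ) : R) ≠ 0 := Nat.cast_ne_zero.mpr hp.ne_zero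
  have heT : addVal R ((p : ℕ) : R) ≠ ⊤ := by simp [addVal_eq_top_iff, hpR]
  obtain ⟨e, he⟩ := WithTop.ne_top_iff_exists.mp heT
  -- `he : ↑e = addVal R ↑p`
  have hpm : ((p : ℕ) : R) ∈ IsLocalRing.maximalIdeal R := by
    rw [← IsLocalRing.residue_eq_zero_iff]
    rw [show (IsLocalRing.residue R) ((p : ℕ) : R) = ((p : ℕ) : IsLocalRing.ResidueField R)
      from map_natCast _ _]
    exact CharP.cast_eq_zero _ p
  have he1 : 1 ≤ e := by
    rw [← pow_one (IsLocalRing.maximalIdeal R)] at hpm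
    have h1 := mem_maximalIdeal_pow_iff.mp hpm
    rw [← he] at h1
    exact Nat.one_le_cast.mp h1
  have hVdT : gaussV (f - h ^ p) ≠ ⊤ := by
    obtain ⟨i, hi⟩ : ∃ i, coeff i (f - h ^ p) ≠ 0 := by
      by_contra hcon
      push_neg at hcon
      exact hd0 (PowerSeries.ext hcon)
    intro hT
    have h1 := gaussV_le (f - h ^ p) i
    rw [hT, top_le_iff, addVal_eq_top_iff] at h1
    exact hi h1
  obtain ⟨N, hNe⟩ := WithTop.ne_top_iff_exists.mp hVdT
  -- `hNe : ↑N = gaussV (f - h^p)`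
  have hlt : p * e < (p - 1) * N := by
    rw [hVd, ← hNe, ← he] at hv
    have h1 : ((p * e : ℕ) : ℕ∞) < (((p - 1) * N : ℕ) : ℕ∞) := by push_cast; exact hv
    exact_mod_cast h1
  have hnum : p * e + 1 ≤ (p - 1) * N := hlt
  have heN : e + 1 ≤ N := by
    by_contra hcon
    push_neg at hcon
    have h3 : (p - 1) * N ≤ (p - 1) * e := Nat.mul_le_mul_left _ (by omega)
    have h4 : (p - 1) * e ≤ p * e := Nat.mul_le_mul_right _ (by omega)
    omega
  set P : ℕ → PowerSeries R → Prop :=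
    fun n x => IsUnit x ∧ ((N + n : ℕ) : ℕ∞) ≤ gaussV (f - x ^ p) with hP
  have hstep : ∀ n (x : PowerSeries R), P n x →
      ∃ y, P (n + 1) y ∧ ((N + n - e : ℕ) : ℕ∞) ≤ gaussV (y - x) := by
    rintro n x ⟨hxu, hxV⟩
    have hnum' : p * e + 1 ≤ (p - 1) * (N + n) :=
      le_trans hnum (Nat.mul_le_mul_left _ (by omega))
    obtain ⟨y, hy1, hy2, hy3⟩ := key_step hp he.symm (by omega) hnum' f x hxu hxV
    refine ⟨y, ⟨hy1, ?_⟩, hy2⟩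
    rw [show N + (n + 1) = N + n + 1 by omega]
    exact hy3
  choose F hF1 hF2 using hstep
  let s : ∀ n : ℕ, {x : PowerSeries R // P n x} := fun n =>
    Nat.rec ⟨h, hh, by simpa using (show (N : ℕ∞) ≤ gaussV (f - h ^ p) from hNe.le)⟩ (fun k ih => ⟨F k ih.1 ih.2, hF1 k ih.1 ih.2⟩) n
  have hs : ∀ n, ((N + n - e : ℕ) : ℕ∞) ≤ gaussV ((s (n + 1)).1 - (s n).1) :=
    fun n => hF2 n (s n).1 (s n).2
  have hgauss_n : ∀ a n : ℕ, (a : ℕ∞) ≤ gaussV ((s (a + n)).1 - (s a).1) := by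
    intro a n
    induction n with
    | zero =>
      rw [Nat.add_zero, sub_self, le_gaussV_iff]
      intro i
      rw [map_zero, addVal_zero]
      exact le_top
    | succ n ih =>
      have h1 := hs (a + n)
      have hsplit : (s (a + n + 1)).1 - (s a).1 =
          ((s (a + n + 1)).1 - (s (a + n)).1) + ((s (a + n)).1 - (s a).1) := by ring
      rw [show a + (n + 1) = a + n + 1 by omega, hsplit]
      refine le_gaussV_add (le_trans ?_ h1) ih
      exact Nat.cast_le.mpr (by omega)
  have hcauchy : ∀ i : ℕ, ∀ {a b : ℕ}, a ≤ b →
      coeff i (s a).1 ≡ coeff i (s b).1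
        [SMOD ((IsLocalRing.maximalIdeal R) ^ a • ⊤ : Submodule R R)] := by
    intro i a b hab
    rw [smod_top_iff]
    obtain ⟨n, rfl⟩ := Nat.exists_eq_add_of_le hab
    have h1 := (hgauss_n a n).trans (gaussV_le _ i)
    rw [map_sub] at h1
    rw [show coeff i (s a).1 - coeff i (s (a + n)).1 =
      -(coeff i (s (a + n)).1 - coeff i (s a).1) by ring, addVal_neg]
    exact h1
  have hexist : ∀ i : ℕ, ∃ L, ∀ n, coeff i (s n).1 ≡ L
      [SMOD ((IsLocalRing.maximalIdeal R) ^ n • ⊤ : Submodule R R)] :=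
    fun i => IsPrecomplete.prec (IsAdicComplete.toIsPrecomplete) (fun {a b} hab => hcauchy i hab)
  choose L hL using hexist
  set g := PowerSeries.mk L with hg
  have hglim : ∀ n : ℕ, (n : ℕ∞) ≤ gaussV (g - (s n).1) := by
    intro n
    rw [le_gaussV_iff]
    intro i
    have h1 := (hL i n)
    rw [smod_top_iff] at h1
    rw [map_sub, show coeff i g - coeff i (s n).1 =
      -(coeff i (s n).1 - coeff i g) by ring, addVal_neg, hg, PowerSeries.coeff_mk]
    exact h1
  refine ⟨g, ?_⟩
  rw [← sub_eq_zero]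
  ext i
  rw [map_zero]
  refine IsHausdorff.haus (inferInstance : IsHausdorff (IsLocalRing.maximalIdeal R) R) _ ?_
  intro n
  rw [SModEq.zero, ← Ideal.one_eq_top, smul_eq_mul, mul_one, mem_maximalIdeal_pow_iff]
  have hdecomp : g ^ p - f = (g ^ p - ((s n).1) ^ p) + (((s n).1) ^ p - f) := by ring
  have hb1 : (n : ℕ∞) ≤ gaussV (g ^ p - ((s n).1) ^ p) := by
    obtain ⟨w, hw⟩ := sub_dvd_pow_sub_pow g ((s n).1) p
    rw [hw]
    simpa using le_gaussV_mul (hglim n) (zero_le : (0 : ℕ∞) ≤ gaussV w)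
  have hb2 : (n : ℕ∞) ≤ gaussV (((s n).1) ^ p - f) := by
    rw [show ((s n).1) ^ p - f = -(f - ((s n).1) ^ p) by ring, gaussV_neg]
    refine le_trans ?_ (s n).2.2
    exact Nat.cast_le.mpr (by omega)
  rw [hdecomp]
  exact (le_gaussV_add hb1 hb2).trans (gaussV_le _ i)
end
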